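/- Let P ∈ ℝ^{n×n} be symmetric positive definite, K ∈ ℝ^{m×n}, A ∈ ℝ^{n×n}, B ∈ ℝ^{n×m}, β > 0, and set L := KP. Suppose the 4×4 block matrix [[P−βI, 0, 0, 0],[0, −P, −Lᵀ, 0],[0, −L, 0, L],[0, 0, Lᵀ, P]] + vvᵀ ≥ 0 with v = [X₊; −X₋; −U₋; 0] and X₊ = AX₋ + BU₋. Then P − (A+BK)P(A+BK)ᵀ ≥ βI. -/

import Mathlib

open Matrix

/-- Special case of the computation in the proof of Theorem 2: with `L := KP`,
feasibility of the LMI yields the Lyapunov inequality `P − (A+BK)P(A+BK)ᵀ ≥ βI`. -/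
theorem lmi_implies_lyapunov {n m T : ℕ}
    (Xm Xp : Matrix (Fin n) (Fin T) ℝ) (Um : Matrix (Fin m) (Fin T) ℝ)
    (P : Matrix (Fin n) (Fin n) ℝ) (K : Matrix (Fin m) (Fin n) ℝ)
    (A : Matrix (Fin n) (Fin n) ℝ) (B : Matrix (Fin n) (Fin m) ℝ) (β : ℝ)
    (hP : P.PosDef) (hβ : 0 < β)
    (hdata : Xp = A * Xm + B * Um)
    (hLMI :
      (fromBlocks
        (fromBlocks (P - β • (1 : Matrix (Fin n) (Fin n) ℝ)) 0 0 (-P))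
        (fromBlocks 0 0 (-(K * P)ᵀ) 0)
        (fromBlocks 0 (-(K * P)) 0 0)
        (fromBlocks 0 (K * P) (K * P)ᵀ P) +
       fromRows (fromRows Xp (-Xm)) (fromRows (-Um) (0 : Matrix (Fin n) (Fin T) ℝ)) *
        (fromRows (fromRows Xp (-Xm)) (fromRows (-Um) (0 : Matrix (Fin n) (Fin T) ℝ)))ᵀ).PosSemidef) :
    (P - (A + B * K) * P * (A + B * K)ᵀ - β • (1 : Matrix (Fin n) (Fin n) ℝ)).PosSemidef := by
  set C : Matrix (Fin n) ((Fin n ⊕ Fin n) ⊕ (Fin m ⊕ Fin n)) ℝ :=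
    fromCols (fromCols 1 A) (fromCols B (-(B * K))) with hC
  have h := hLMI.mul_mul_conjTranspose_same C
  have hCT : Cᴴ = fromRows (fromRows 1 Aᵀ) (fromRows Bᵀ (-(B * K))ᵀ) := by
    simp [hC, conjTranspose_eq_transpose_of_trivial, transpose_fromCols]
  rw [hCT] at h
  have hCv : C * fromRows (fromRows Xp (-Xm)) (fromRows (-Um) (0 : Matrix (Fin n) (Fin T) ℝ)) = 0 := by
    simp [hC, fromCols_mul_fromRows, hdata]
  have hPt : Pᵀ = P := by
    rw [← conjTranspose_eq_transpose_of_trivial]; exact hP.isHermitian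
  have key : C * (fromBlocks
        (fromBlocks (P - β • (1 : Matrix (Fin n) (Fin n) ℝ)) 0 0 (-P))
        (fromBlocks 0 0 (-(K * P)ᵀ) 0)
        (fromBlocks 0 (-(K * P)) 0 0)
        (fromBlocks 0 (K * P) (K * P)ᵀ P) +
       fromRows (fromRows Xp (-Xm)) (fromRows (-Um) (0 : Matrix (Fin n) (Fin T) ℝ)) *
        (fromRows (fromRows Xp (-Xm)) (fromRows (-Um) (0 : Matrix (Fin n) (Fin T) ℝ)))ᵀ) *
      (fromRows (fromRows 1 Aᵀ) (fromRows Bᵀ (-(B * K))ᵀ) :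
        Matrix ((Fin n ⊕ Fin n) ⊕ (Fin m ⊕ Fin n)) (Fin n) ℝ)
      = P - (A + B * K) * P * (A + B * K)ᵀ - β • (1 : Matrix (Fin n) (Fin n) ℝ) := by
    rw [Matrix.mul_add, Matrix.add_mul, ← Matrix.mul_assoc, hCv]
    simp only [hC, fromCols_mul_fromBlocks, fromCols_mul_fromRows,
      Matrix.mul_zero, Matrix.zero_mul, Matrix.mul_one, Matrix.one_mul,
      Matrix.mul_neg, Matrix.neg_mul, neg_neg, add_zero, zero_add,
      Matrix.add_mul, Matrix.mul_add, transpose_add, transpose_mul, Matrix.mul_assoc, hPt]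
    abel_nf
  rw [key] at h
  exact h
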